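/- arXiv:1906.11740 — 3 statements merged into one kernel-verified Lean document; each statement's English description precedes it below -/
import Mathlib

section
/- Let β ∈ (0,∞) and μ ∈ ℝ, and let f_β(x) = (1+e^{βx})^{−1} denote the Fermi–Dirac distribution. Then there exists a function G, holomorphic on the open set Ω_β := ℂ \ {μ + ir : r ∈ ℝ, |r| ≥ π/β}, such that G(x) = (2/β)·log(1 − f_β(x−μ)) for every real x (here 1 − f_β(x−μ) ∈ (0,1), so the real logarithm is used). Moreover, since Ω_β is connected and contains ℝ, such a holomorphic extension is unique. -/
/-- The Fermi–Dirac distribution `f_β(x) = (1 + e^{βx})⁻¹`. -/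
noncomputable def fermiDirac (β x : ℝ) : ℝ := (1 + Real.exp (β * x))⁻¹

/-- `𝔤^β(x;μ) = (2/β)·log(1 − f_β(x−μ))` for real `x`. -/
noncomputable def gBeta (β μ x : ℝ) : ℝ := (2 / β) * Real.log (1 - fermiDirac β (x - μ))

/-- The open set `Ω_β = ℂ \ {μ + ir : r ∈ ℝ, |r| ≥ π/β}`. -/
def OmegaSet (β μ : ℝ) : Set ℂ :=
  {z : ℂ | ∀ r : ℝ, Real.pi / β ≤ |r| → z ≠ (μ : ℂ) + (r : ℂ) * Complex.I}

/- Auxiliary definitions: two local holomorphic branches of the extension. -/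
noncomputable def G1aux (β μ : ℝ) (z : ℂ) : ℂ :=
  2 * (z - (μ : ℂ)) - (2 / (β : ℂ)) * Complex.log (1 + Complex.exp ((β : ℂ) * (z - (μ : ℂ))))

noncomputable def G2aux (β μ : ℝ) (z : ℂ) : ℂ :=
  -(2 / (β : ℂ)) * Complex.log (1 + Complex.exp (-((β : ℂ) * (z - (μ : ℂ)))))

noncomputable def Gaux (β μ : ℝ) (z : ℂ) : ℂ :=
  if z.re < μ then G1aux β μ z else G2aux β μ z

lemma mem_omega_iff {β μ : ℝ} {z : ℂ} :
    z ∈ OmegaSet β μ ↔ z.re ≠ μ ∨ |z.im| < Real.pi / β := by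
  constructor
  · intro h
    by_contra hc
    push_neg at hc
    obtain ⟨h1, h2⟩ := hc
    exact h z.im h2 (by apply Complex.ext <;> simp [h1])
  · rintro (h | h) r hr hz
    · apply h; rw [hz]; simp
    · apply absurd h; push_neg
      have : z.im = r := by rw [hz]; simp
      rw [this]; exact hr

lemma slit_aux {w : ℂ} (h : w.re < 0 ∨ |w.im| < Real.pi) :
    1 + Complex.exp w ∈ Complex.slitPlane := by
  rw [Complex.mem_slitPlane_iff]
  rcases h with h | h
  · left
    have h1 : Real.exp w.re < 1 := Real.exp_lt_one_iff.mpr h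
    have h2 : -1 ≤ Real.cos w.im := Real.neg_one_le_cos w.im
    have h3 : (0:ℝ) < Real.exp w.re := Real.exp_pos _
    have : (1 + Complex.exp w).re = 1 + Real.exp w.re * Real.cos w.im := by
      simp [Complex.exp_re]
    rw [this]; nlinarith
  · rcases eq_or_ne (1 + Complex.exp w).im 0 with h0 | h0
    · left
      have him : (1 + Complex.exp w).im = Real.exp w.re * Real.sin w.im := by
        simp [Complex.exp_im]
      rw [him] at h0
      have hs : Real.sin w.im = 0 := by
        rcases mul_eq_zero.mp h0 with h' | h'
        · exact absurd h' (ne_of_gt (Real.exp_pos _))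
        · exact h'
      have hw0 : w.im = 0 := by
        rw [abs_lt] at h
        exact (Real.sin_eq_zero_iff_of_lt_of_lt h.1 h.2).mp hs
      have : (1 + Complex.exp w).re = 1 + Real.exp w.re * Real.cos w.im := by
        simp [Complex.exp_re]
      rw [this, hw0]
      simp [Real.cos_zero]
      positivity
    · right; exact h0

lemma diff_G1 {β μ : ℝ} (hβ : 0 < β) {z : ℂ}
    (h : z.re < μ ∨ |z.im| < Real.pi / β) : DifferentiableAt ℂ (G1aux β μ) z := by
  have hre : ((β : ℂ) * (z - (μ : ℂ))).re = β * (z.re - μ) := by simp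
  have him : ((β : ℂ) * (z - (μ : ℂ))).im = β * z.im := by simp
  have hslit : 1 + Complex.exp ((β : ℂ) * (z - (μ : ℂ))) ∈ Complex.slitPlane := by
    apply slit_aux
    rcases h with h | h
    · left; rw [hre]; nlinarith
    · right; rw [him, abs_mul, abs_of_pos hβ]
      calc β * |z.im| < β * (Real.pi / β) := by exact mul_lt_mul_of_pos_left h hβ
        _ = Real.pi := by field_simp
  have hinner : DifferentiableAt ℂ (fun z : ℂ => 1 + Complex.exp ((β : ℂ) * (z - (μ : ℂ)))) z := by
    apply DifferentiableAt.const_add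
    apply DifferentiableAt.cexp
    exact ((differentiableAt_id.sub (differentiableAt_const _)).const_mul _)
  have hlog : DifferentiableAt ℂ
      (fun z : ℂ => Complex.log (1 + Complex.exp ((β : ℂ) * (z - (μ : ℂ))))) z :=
    hinner.clog hslit
  exact ((differentiableAt_id.sub (differentiableAt_const _)).const_mul 2).sub (hlog.const_mul _)

lemma diff_G2 {β μ : ℝ} (hβ : 0 < β) {z : ℂ}
    (h : μ < z.re ∨ |z.im| < Real.pi / β) : DifferentiableAt ℂ (G2aux β μ) z := by
  have hre : (-((β : ℂ) * (z - (μ : ℂ)))).re = -(β * (z.re - μ)) := by simp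
  have him : (-((β : ℂ) * (z - (μ : ℂ)))).im = -(β * z.im) := by simp
  have hslit : 1 + Complex.exp (-((β : ℂ) * (z - (μ : ℂ)))) ∈ Complex.slitPlane := by
    apply slit_aux
    rcases h with h | h
    · left; rw [hre]; nlinarith
    · right; rw [him, abs_neg, abs_mul, abs_of_pos hβ]
      calc β * |z.im| < β * (Real.pi / β) := by exact mul_lt_mul_of_pos_left h hβ
        _ = Real.pi := by field_simp
  have hinner : DifferentiableAt ℂ
      (fun z : ℂ => 1 + Complex.exp (-((β : ℂ) * (z - (μ : ℂ))))) z := by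
    apply DifferentiableAt.const_add
    apply DifferentiableAt.cexp
    exact ((differentiableAt_id.sub (differentiableAt_const _)).const_mul _).neg
  have hlog : DifferentiableAt ℂ
      (fun z : ℂ => Complex.log (1 + Complex.exp (-((β : ℂ) * (z - (μ : ℂ)))))) z :=
    hinner.clog hslit
  exact hlog.const_mul _

lemma gBeta_eq1 {β μ : ℝ} (hβ : 0 < β) (x : ℝ) :
    gBeta β μ x = 2 * (x - μ) - (2 / β) * Real.log (1 + Real.exp (β * (x - μ))) := by
  have hE : (0:ℝ) < Real.exp (β * (x - μ)) := Real.exp_pos _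
  have h1 : 1 - fermiDirac β (x - μ)
      = Real.exp (β * (x - μ)) / (1 + Real.exp (β * (x - μ))) := by
    unfold fermiDirac
    field_simp
    ring
  unfold gBeta
  rw [h1, Real.log_div (ne_of_gt hE) (by positivity), Real.log_exp]
  field_simp

lemma gBeta_eq2 {β μ : ℝ} (hβ : 0 < β) (x : ℝ) :
    gBeta β μ x = -(2 / β) * Real.log (1 + Real.exp (-(β * (x - μ)))) := by
  have hE : (0:ℝ) < Real.exp (β * (x - μ)) := Real.exp_pos _
  have h1 : 1 - fermiDirac β (x - μ) = (1 + Real.exp (-(β * (x - μ))))⁻¹ := by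
    unfold fermiDirac
    rw [Real.exp_neg]
    rw [eq_comm, inv_eq_iff_eq_inv, eq_comm]
    field_simp
    ring
  unfold gBeta
  rw [h1, Real.log_inv]
  ring

lemma G1_real {β μ : ℝ} (hβ : 0 < β) (x : ℝ) :
    G1aux β μ (x : ℂ) = ((gBeta β μ x : ℝ) : ℂ) := by
  have hpos : (0:ℝ) ≤ 1 + Real.exp (β * (x - μ)) := by positivity
  unfold G1aux
  rw [gBeta_eq1 hβ x]
  have h1 : (1 : ℂ) + Complex.exp ((β : ℂ) * ((x : ℂ) - (μ : ℂ)))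
      = ((1 + Real.exp (β * (x - μ)) : ℝ) : ℂ) := by
    push_cast
    ring
  rw [h1, ← Complex.ofReal_log hpos]
  push_cast
  ring

lemma G2_real {β μ : ℝ} (hβ : 0 < β) (x : ℝ) :
    G2aux β μ (x : ℂ) = ((gBeta β μ x : ℝ) : ℂ) := by
  have hpos : (0:ℝ) ≤ 1 + Real.exp (-(β * (x - μ))) := by positivity
  unfold G2aux
  rw [gBeta_eq2 hβ x]
  have h1 : (1 : ℂ) + Complex.exp (-((β : ℂ) * ((x : ℂ) - (μ : ℂ))))
      = ((1 + Real.exp (-(β * (x - μ))) : ℝ) : ℂ) := by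
    push_cast
    ring
  rw [h1, ← Complex.ofReal_log hpos]
  push_cast
  ring

/-- The open strip `|Im z| < π/β`. -/
def stripSet (β : ℝ) : Set ℂ := {z : ℂ | |z.im| < Real.pi / β}

lemma strip_open (β : ℝ) : IsOpen (stripSet β) :=
  isOpen_lt (Complex.continuous_im.abs) continuous_const

lemma strip_convex (β : ℝ) : Convex ℝ (stripSet β) := by
  have : stripSet β = {z : ℂ | z.im < Real.pi / β} ∩ {z : ℂ | -(Real.pi / β) < z.im} := by
    ext z; simp [stripSet, abs_lt, and_comm]
  rw [this]
  exact (convex_halfSpace_im_lt _).inter (convex_halfSpace_im_gt _)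

lemma freq_real {β μ : ℝ} (hβ : 0 < β) {f g : ℂ → ℂ}
    (hf : ∀ x : ℝ, f (x : ℂ) = ((gBeta β μ x : ℝ) : ℂ))
    (hg : ∀ x : ℝ, g (x : ℂ) = ((gBeta β μ x : ℝ) : ℂ)) :
    ∃ᶠ z in nhdsWithin (μ : ℂ) {(μ : ℂ)}ᶜ, f z = g z := by
  have htend : Filter.Tendsto (fun n : ℕ => ((μ + 1 / (n + 1) : ℝ) : ℂ)) Filter.atTop
      (nhdsWithin (μ : ℂ) {(μ : ℂ)}ᶜ) := by
    rw [tendsto_nhdsWithin_iff]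
    constructor
    · have : Filter.Tendsto (fun n : ℕ => (μ + 1 / (n + 1) : ℝ)) Filter.atTop (nhds μ) := by
        have := tendsto_one_div_add_atTop_nhds_zero_nat (𝕜 := ℝ)
        have h2 := this.const_add μ
        simpa using h2
      exact (Complex.continuous_ofReal.tendsto μ).comp this
    · filter_upwards with n
      simp only [Set.mem_compl_iff, Set.mem_singleton_iff]
      intro h
      have h' : (μ + 1 / (n + 1) : ℝ) = μ := by exact_mod_cast h
      have : (1 : ℝ) / (n + 1) = 0 := by linarith
      have hpos : (0:ℝ) < 1 / (n + 1) := by positivity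
      linarith
  apply htend.frequently
  apply Filter.Frequently.of_forall
  intro n
  rw [hf, hg]

lemma G1_eq_G2_strip {β μ : ℝ} (hβ : 0 < β) :
    Set.EqOn (G1aux β μ) (G2aux β μ) (stripSet β) := by
  have hopen := strip_open β
  have hA1 : AnalyticOnNhd ℂ (G1aux β μ) (stripSet β) := by
    apply DifferentiableOn.analyticOnNhd _ hopen
    intro z hz
    exact (diff_G1 hβ (Or.inr hz)).differentiableWithinAt
  have hA2 : AnalyticOnNhd ℂ (G2aux β μ) (stripSet β) := by
    apply DifferentiableOn.analyticOnNhd _ hopen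
    intro z hz
    exact (diff_G2 hβ (Or.inr hz)).differentiableWithinAt
  have hμ : (μ : ℂ) ∈ stripSet β := by
    simp only [stripSet, Set.mem_setOf_eq, Complex.ofReal_im, abs_zero]
    positivity
  exact hA1.eqOn_of_preconnected_of_frequently_eq hA2 (strip_convex β).isPreconnected hμ
    (freq_real hβ (fun x => G1_real hβ x) (fun x => G2_real hβ x))

lemma omega_open {β μ : ℝ} : IsOpen (OmegaSet β μ) := by
  have : OmegaSet β μ = {z : ℂ | z.re ≠ μ} ∪ stripSet β := by
    ext z; rw [mem_omega_iff]; rfl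
  rw [this]
  exact (isOpen_ne_fun Complex.continuous_re continuous_const).union (strip_open β)

lemma omega_preconnected {β μ : ℝ} (hβ : 0 < β) : IsPreconnected (OmegaSet β μ) := by
  have hdecomp : OmegaSet β μ
      = ({z : ℂ | z.re < μ} ∪ stripSet β) ∪ {z : ℂ | μ < z.re} := by
    ext z
    rw [mem_omega_iff]
    simp only [Set.mem_union, Set.mem_setOf_eq, stripSet]
    constructor
    · rintro (h | h)
      · rcases lt_or_gt_of_ne h with h' | h'
        · exact Or.inl (Or.inl h')
        · exact Or.inr h'
      · exact Or.inl (Or.inr h)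
    · rintro ((h | h) | h)
      · exact Or.inl (ne_of_lt h)
      · exact Or.inr h
      · exact Or.inl (ne_of_gt h)
  rw [hdecomp]
  have hπβ : (0:ℝ) < Real.pi / β := by positivity
  have hleft : IsPreconnected ({z : ℂ | z.re < μ} ∪ stripSet β) := by
    apply IsPreconnected.union ((μ - 1 : ℝ) : ℂ)
    · simp
    · simp [stripSet, hπβ]
    · exact (convex_halfSpace_re_lt μ).isPreconnected
    · exact (strip_convex β).isPreconnected
  apply IsPreconnected.union ((μ + 1 : ℝ) : ℂ)
  · right; simp [stripSet, hπβ]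
  · simp
  · exact hleft
  · exact (convex_halfSpace_re_gt μ).isPreconnected

lemma Gaux_diff {β μ : ℝ} (hβ : 0 < β) :
    DifferentiableOn ℂ (Gaux β μ) (OmegaSet β μ) := by
  intro z hz
  rw [mem_omega_iff] at hz
  apply DifferentiableAt.differentiableWithinAt
  rcases lt_trichotomy z.re μ with h | h | h
  · -- locally equal to G1aux on the open half-plane re < μ
    have hopen : IsOpen {w : ℂ | w.re < μ} := isOpen_lt Complex.continuous_re continuous_const
    have hev : Gaux β μ =ᶠ[nhds z] G1aux β μ := by
      filter_upwards [hopen.mem_nhds h] with w hw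
      simp [Gaux, hw]
    exact hev.differentiableAt_iff.mpr (diff_G1 hβ (Or.inl h))
  · -- on the strip; Gaux agrees with G1aux there
    have hstrip : z ∈ stripSet β := by
      rcases hz with h' | h'
      · exact absurd h h'
      · exact h'
    have hev : Gaux β μ =ᶠ[nhds z] G1aux β μ := by
      filter_upwards [(strip_open β).mem_nhds hstrip] with w hw
      by_cases hw' : w.re < μ
      · simp [Gaux, hw']
      · simp only [Gaux, if_neg hw']
        exact (G1_eq_G2_strip hβ hw).symm
    exact hev.differentiableAt_iff.mpr (diff_G1 hβ (Or.inr hstrip))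
  · have hopen : IsOpen {w : ℂ | μ < w.re} := isOpen_lt continuous_const Complex.continuous_re
    have hev : Gaux β μ =ᶠ[nhds z] G2aux β μ := by
      filter_upwards [hopen.mem_nhds h] with w hw
      simp [Gaux, not_lt_of_gt hw]
    exact hev.differentiableAt_iff.mpr (diff_G2 hβ (Or.inl h))

/-- For `β ∈ (0,∞)` and `μ ∈ ℝ` there exists a holomorphic function `G`
on `Ω_β = ℂ \ {μ + ir : |r| ≥ π/β}` which agrees with `x ↦ (2/β)·log(1 − f_β(x−μ))` on the
real axis; moreover any two such holomorphic extensions agree on all of `Ω_β`. -/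
theorem stmt0 (β μ : ℝ) (hβ : 0 < β) :
    (∃ G : ℂ → ℂ, DifferentiableOn ℂ G (OmegaSet β μ) ∧
      ∀ x : ℝ, G (x : ℂ) = ((gBeta β μ x : ℝ) : ℂ)) ∧
    (∀ G₁ G₂ : ℂ → ℂ,
      (DifferentiableOn ℂ G₁ (OmegaSet β μ) ∧ ∀ x : ℝ, G₁ (x : ℂ) = ((gBeta β μ x : ℝ) : ℂ)) →
      (DifferentiableOn ℂ G₂ (OmegaSet β μ) ∧ ∀ x : ℝ, G₂ (x : ℂ) = ((gBeta β μ x : ℝ) : ℂ)) →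
      Set.EqOn G₁ G₂ (OmegaSet β μ)) := by
  constructor
  · refine ⟨Gaux β μ, Gaux_diff hβ, fun x => ?_⟩
    by_cases hx : (x : ℂ).re < μ
    · rw [Gaux, if_pos hx]; exact G1_real hβ x
    · rw [Gaux, if_neg hx]; exact G2_real hβ x
  · rintro G₁ G₂ ⟨hd1, hr1⟩ ⟨hd2, hr2⟩
    have hopen : IsOpen (OmegaSet β μ) := omega_open
    have hA1 : AnalyticOnNhd ℂ G₁ (OmegaSet β μ) := hd1.analyticOnNhd hopen
    have hA2 : AnalyticOnNhd ℂ G₂ (OmegaSet β μ) := hd2.analyticOnNhd hopen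
    have hμ : (μ : ℂ) ∈ OmegaSet β μ := by
      rw [mem_omega_iff]
      right
      simp only [Complex.ofReal_im, abs_zero]
      positivity
    exact hA1.eqOn_of_preconnected_of_frequently_eq hA2 (omega_preconnected hβ) hμ
      (freq_real hβ hr1 hr2)
end

section
/- Two-centre exponential lattice sum. Fix d ≥ 1 and 𝔪 > 0. There exists C > 0, depending only on d and 𝔪, such that for every set Y ⊂ ℝ^d whose points have pairwise distances at least 𝔪, every pair a, b ∈ ℝ^d, and every η > 0, one has Σ_{p ∈ Y} e^{−η(|a − p| + |p − b|)} ≤ C (1 + η^{−d}) (1 + |a − b|)^d e^{−η|a − b|}. -/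
open Real ENNReal Metric MeasureTheory


-- Lemma C: series bound
lemma seriesC (d : ℕ) {η : ℝ} (hη : 0 < η) :
    (∑' m : ℕ, ENNReal.ofReal ((1 - Real.exp (-η)) * Real.exp (-η) ^ m * (1 + m) ^ d))
      ≤ ENNReal.ofReal ((d.factorial : ℝ) * (1 + η⁻¹) ^ d) := by
  set x := Real.exp (-η) with hxdef
  have hx0 : 0 ≤ x := (Real.exp_pos _).le
  have hx1 : x < 1 := Real.exp_lt_one_iff.mpr (by linarith)
  have hx1' : (0:ℝ) < 1 - x := by linarith
  have hnorm : ‖x‖ < 1 := by rwa [Real.norm_eq_abs, abs_of_nonneg hx0]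
  -- termwise bound by choose
  have hterm : ∀ m : ℕ, (1 - x) * x ^ m * (1 + m) ^ d
      ≤ (1 - x) * (d.factorial : ℝ) * (((m + d).choose d : ℝ) * x ^ m) := by
    intro m
    have hnat : (m + 1) ^ d ≤ d.factorial * (m + d).choose d := by
      calc (m + 1) ^ d ≤ (m + 1).ascFactorial d := Nat.pow_succ_le_ascFactorial (m+1) d
        _ = d.factorial * (m + d).choose d := Nat.ascFactorial_eq_factorial_mul_choose m d
    have hcast : ((1:ℝ) + m) ^ d ≤ (d.factorial : ℝ) * ((m + d).choose d : ℝ) := by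
      have := Nat.cast_le (α := ℝ).mpr hnat
      push_cast at this
      calc ((1:ℝ) + m) ^ d = ((m:ℝ) + 1) ^ d := by ring_nf
        _ ≤ _ := this
    have hxm : (0:ℝ) ≤ x ^ m := pow_nonneg hx0 m
    nlinarith [pow_nonneg hx0 m, mul_le_mul_of_nonneg_left hcast hxm]
  have hsum : Summable (fun m : ℕ => (1 - x) * (d.factorial : ℝ) * (((m + d).choose d : ℝ) * x ^ m)) :=
    (summable_choose_mul_geometric_of_norm_lt_one d hnorm).mul_left _
  have hnn : ∀ m : ℕ, 0 ≤ (1 - x) * x ^ m * (1 + m) ^ d := by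
    intro m
    positivity
  have hnn2 : ∀ m : ℕ, 0 ≤ (1 - x) * (d.factorial : ℝ) * (((m + d).choose d : ℝ) * x ^ m) := by
    intro m; positivity
  calc (∑' m : ℕ, ENNReal.ofReal ((1 - x) * x ^ m * (1 + m) ^ d))
      ≤ ∑' m : ℕ, ENNReal.ofReal ((1 - x) * (d.factorial : ℝ) * (((m + d).choose d : ℝ) * x ^ m)) :=
        ENNReal.tsum_le_tsum (fun m => ENNReal.ofReal_le_ofReal (hterm m))
    _ = ENNReal.ofReal (∑' m : ℕ, (1 - x) * (d.factorial : ℝ) * (((m + d).choose d : ℝ) * x ^ m)) :=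
        (ENNReal.ofReal_tsum_of_nonneg hnn2 hsum).symm
    _ ≤ ENNReal.ofReal ((d.factorial : ℝ) * (1 + η⁻¹) ^ d) := by
        apply ENNReal.ofReal_le_ofReal
        rw [tsum_mul_left, tsum_choose_mul_geometric_of_norm_lt_one d hnorm]
        have hinv : (1 - x)⁻¹ ≤ 1 + η⁻¹ := by
          have hxle : x ≤ (1 + η)⁻¹ := by
            rw [hxdef, Real.exp_neg]
            exact inv_anti₀ (by positivity) (by linarith [Real.add_one_le_exp η])
          have h1 : η / (1 + η) ≤ 1 - x := by
            have : 1 - (1 + η)⁻¹ = η / (1 + η) := by field_simp; ring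
            linarith [this ▸ sub_le_sub_left hxle 1]
          calc (1 - x)⁻¹ ≤ (η / (1 + η))⁻¹ := by
                apply inv_anti₀ (by positivity) h1
            _ = (1 + η) / η := by rw [inv_div]
            _ = 1 + η⁻¹ := by field_simp; ring
        calc (1 - x) * (d.factorial : ℝ) * (1 / (1 - x) ^ (d + 1))
            = (d.factorial : ℝ) * ((1 - x)⁻¹) ^ d := by
              rw [pow_succ]
              field_simp
              ring
              rw [← mul_pow, inv_mul_cancel₀ hx1'.ne', one_pow]
          _ ≤ (d.factorial : ℝ) * (1 + η⁻¹) ^ d := by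
              apply mul_le_mul_of_nonneg_left _ (by positivity)
              exact pow_le_pow_left₀ (by positivity) hinv d


lemma ptwise {η : ℝ} (hη : 0 < η) {s : ℝ} (hs : 0 ≤ s) :
    ENNReal.ofReal (Real.exp (-η * s)) ≤
      ∑' m : ℕ, (if s ≤ m + 1 then
        ENNReal.ofReal ((1 - Real.exp (-η)) * Real.exp (-η) ^ m) else 0) := by
  set x := Real.exp (-η) with hxdef
  have hx0 : 0 ≤ x := (Real.exp_pos _).le
  have hx1 : x < 1 := Real.exp_lt_one_iff.mpr (by linarith)
  have hx1' : (0:ℝ) < 1 - x := by linarith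
  set n := ⌊s⌋₊ with hn
  have hns : (n : ℝ) ≤ s := Nat.floor_le hs
  have hsn : s < n + 1 := Nat.lt_floor_add_one s
  -- the shifted sum equals ofReal (x ^ n)
  have hshift : (∑' k : ℕ, (if s ≤ (n + k : ℕ) + 1 then
      ENNReal.ofReal ((1 - x) * x ^ (n + k)) else 0)) = ENNReal.ofReal (x ^ n) := by
    have hcond : ∀ k : ℕ, s ≤ ((n + k : ℕ) : ℝ) + 1 := by
      intro k
      push_cast
      linarith [Nat.cast_nonneg (α := ℝ) k]
    have h1 : (∑' k : ℕ, (if s ≤ (n + k : ℕ) + 1 then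
        ENNReal.ofReal ((1 - x) * x ^ (n + k)) else 0)) =
        ∑' k : ℕ, ENNReal.ofReal ((1 - x) * x ^ n) * (ENNReal.ofReal x) ^ k := by
      congr 1
      ext k
      rw [if_pos (hcond k), pow_add, ← mul_assoc, ENNReal.ofReal_mul (by positivity),
        ENNReal.ofReal_pow hx0]
    rw [h1, ENNReal.tsum_mul_left, ENNReal.tsum_geometric]
    have h2 : (1 : ℝ≥0∞) - ENNReal.ofReal x = ENNReal.ofReal (1 - x) := by
      rw [← ENNReal.ofReal_one, ← ENNReal.ofReal_sub _ hx0]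
    rw [h2, ENNReal.ofReal_mul (by linarith), mul_comm (ENNReal.ofReal (1-x)), mul_assoc,
      ENNReal.mul_inv_cancel (by simp; exact hx1) ENNReal.ofReal_ne_top, mul_one]
  calc ENNReal.ofReal (Real.exp (-η * s))
      ≤ ENNReal.ofReal (x ^ n) := by
        apply ENNReal.ofReal_le_ofReal
        rw [hxdef, ← Real.exp_nat_mul]
        exact Real.exp_le_exp.mpr (by nlinarith)
    _ = _ := hshift.symm
    _ ≤ _ := tsum_comp_le_tsum_of_injective (add_right_injective n)
        (fun m => if s ≤ m + 1 then ENNReal.ofReal ((1 - x) * x ^ m) else 0)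


lemma packA (d : ℕ) (hd : 1 ≤ d) {𝔪 : ℝ} (h𝔪 : 0 < 𝔪)
    (Y : Set (EuclideanSpace ℝ (Fin d)))
    (hY : ∀ p ∈ Y, ∀ q ∈ Y, p ≠ q → 𝔪 ≤ dist p q)
    (a : EuclideanSpace ℝ (Fin d)) {R : ℝ} (hR : 0 ≤ R)
    (T : Finset (EuclideanSpace ℝ (Fin d))) (hT : ↑T ⊆ Y ∩ closedBall a R) :
    (T.card : ℝ) * (𝔪 / 2) ^ d ≤ (R + 𝔪 / 2) ^ d := by
  set r : ℝ := 𝔪 / 2 with hrdef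
  have hr : 0 < r := by positivity
  have hfr : Module.finrank ℝ (EuclideanSpace ℝ (Fin d)) = d := finrank_euclideanSpace_fin
  have hdisj : (↑T : Set (EuclideanSpace ℝ (Fin d))).PairwiseDisjoint
      (fun p => ball p r) := by
    intro p hp q hq hpq
    have h𝔪' : 𝔪 ≤ dist p q := hY p (hT hp).1 q (hT hq).1 hpq
    exact ball_disjoint_ball (by rw [hrdef]; linarith)
  have hsub : (⋃ p ∈ T, ball p r) ⊆ ball a (R + r) := by
    intro y hy
    simp only [Set.mem_iUnion] at hy
    obtain ⟨p, hp, hyp⟩ := hy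
    have h1 : dist p a ≤ R := (hT hp).2
    have h2 : dist y p < r := mem_ball.mp hyp
    exact mem_ball.mpr (lt_of_le_of_lt (dist_triangle y p a) (by linarith))
  have hmeas := measure_biUnion_finset (μ := volume) hdisj
    (fun p _ => measurableSet_ball)
  have hle : ∑ p ∈ T, volume (ball p r) ≤ volume (ball a (R + r)) := by
    rw [← hmeas]
    exact measure_mono hsub
  have hball : ∀ p : EuclideanSpace ℝ (Fin d),
      volume (ball p r) = ENNReal.ofReal (r ^ d) * volume (ball (0 : EuclideanSpace ℝ (Fin d)) 1) := by
    intro p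
    rw [Measure.addHaar_ball_of_pos volume p hr, hfr]
  have hball2 : volume (ball a (R + r)) =
      ENNReal.ofReal ((R + r) ^ d) * volume (ball (0 : EuclideanSpace ℝ (Fin d)) 1) := by
    rw [Measure.addHaar_ball_of_pos volume a (by linarith), hfr]
  rw [Finset.sum_congr rfl (fun p _ => hball p), Finset.sum_const, hball2, nsmul_eq_mul,
    ← mul_assoc] at hle
  have hpos : volume (ball (0 : EuclideanSpace ℝ (Fin d)) 1) ≠ 0 :=
    (measure_ball_pos volume _ one_pos).ne'
  have hfin : volume (ball (0 : EuclideanSpace ℝ (Fin d)) 1) ≠ ⊤ :=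
    measure_ball_lt_top.ne
  have hle2 : (T.card : ℝ≥0∞) * ENNReal.ofReal (r ^ d) ≤ ENNReal.ofReal ((R + r) ^ d) :=
    (ENNReal.mul_le_mul_iff_left hpos hfin).mp hle
  rw [← ENNReal.ofReal_natCast, ← ENNReal.ofReal_mul (by positivity)] at hle2
  exact (ENNReal.ofReal_le_ofReal_iff (by positivity)).mp hle2

lemma packB (d : ℕ) (hd : 1 ≤ d) {𝔪 : ℝ} (h𝔪 : 0 < 𝔪)
    (Y : Set (EuclideanSpace ℝ (Fin d)))
    (hY : ∀ p ∈ Y, ∀ q ∈ Y, p ≠ q → 𝔪 ≤ dist p q)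
    (a : EuclideanSpace ℝ (Fin d)) {R : ℝ} (hR : 0 ≤ R) :
    (∑' p : Y, (closedBall a R).indicator (fun _ => (1 : ℝ≥0∞)) (p : EuclideanSpace ℝ (Fin d)))
      ≤ ENNReal.ofReal ((2 * R / 𝔪 + 1) ^ d) := by
  classical
  rw [ENNReal.tsum_eq_iSup_sum]
  apply iSup_le
  intro S
  set T : Finset (EuclideanSpace ℝ (Fin d)) :=
    Finset.image Subtype.val
      (Finset.filter (fun p : Y => dist (p : EuclideanSpace ℝ (Fin d)) a ≤ R) S)
    with hTdef
  have hTsub : ↑T ⊆ Y ∩ closedBall a R := by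
    intro p hp
    simp only [hTdef, Finset.coe_image, Set.mem_image, Finset.mem_coe, Finset.mem_filter] at hp
    obtain ⟨q, ⟨_, hq2⟩, rfl⟩ := hp
    exact ⟨q.2, mem_closedBall.mpr hq2⟩
  have hcard := packA d hd h𝔪 Y hY a hR T hTsub
  have hsum : (∑ p ∈ S, (closedBall a R).indicator
        (fun _ => (1 : ℝ≥0∞)) (p : EuclideanSpace ℝ (Fin d))) = T.card := by
    have heq : ∀ p : Y, (closedBall a R).indicator (fun _ => (1 : ℝ≥0∞))
        (p : EuclideanSpace ℝ (Fin d)) =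
        if dist (p : EuclideanSpace ℝ (Fin d)) a ≤ R then 1 else 0 := by
      intro p
      rw [Set.indicator_apply]
      congr 1
    rw [Finset.sum_congr rfl (fun p _ => heq p), Finset.sum_boole,
      hTdef, Finset.card_image_of_injective _ Subtype.val_injective]
  rw [hsum]
  have hreal : (T.card : ℝ) ≤ (2 * R / 𝔪 + 1) ^ d := by
    have h1 : ((R + 𝔪 / 2) / (𝔪 / 2)) ^ d = (2 * R / 𝔪 + 1) ^ d := by
      congr 1
      field_simp
    have h2 : (T.card : ℝ) ≤ ((R + 𝔪 / 2) / (𝔪 / 2)) ^ d := by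
      rw [div_pow, le_div_iff₀ (by positivity)]
      exact hcard
    linarith [h1 ▸ h2]
  calc (T.card : ℝ≥0∞) = ENNReal.ofReal (T.card : ℝ) := by
        rw [ENNReal.ofReal_natCast]
    _ ≤ _ := ENNReal.ofReal_le_ofReal hreal

lemma one_add_pow_le (d : ℕ) {t : ℝ} (ht : 0 ≤ t) : (1 + t) ^ d ≤ 2 ^ d * (1 + t ^ d) := by
  rcases le_total t 1 with h | h
  · calc (1 + t) ^ d ≤ 2 ^ d := pow_le_pow_left₀ (by linarith) (by linarith) d
      _ ≤ 2 ^ d * (1 + t ^ d) := by nlinarith [pow_nonneg ht d, pow_pos (show (0:ℝ) < 2 by norm_num) d]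
  · calc (1 + t) ^ d ≤ (2 * t) ^ d := pow_le_pow_left₀ (by linarith) (by linarith) d
      _ = 2 ^ d * t ^ d := mul_pow 2 t d
      _ ≤ 2 ^ d * (1 + t ^ d) := by nlinarith [pow_pos (show (0:ℝ) < 2 by norm_num) d]

/-- **two-centre exponential lattice sum.** Fix `d ≥ 1` and `𝔪 > 0`. There is
`C = C(d,𝔪) > 0` such that for every set `Y ⊂ ℝ^d` with pairwise distances at least `𝔪`,
all `a, b ∈ ℝ^d` and every `η > 0`,
`Σ_{p∈Y} e^{−η(|a−p|+|p−b|)} ≤ C (1 + η^{−d}) (1 + |a−b|)^d e^{−η|a−b|}`. -/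
theorem stmt5 (d : ℕ) (hd : 1 ≤ d) (𝔪 : ℝ) (h𝔪 : 0 < 𝔪) :
    ∃ C : ℝ, 0 < C ∧
      ∀ Y : Set (EuclideanSpace ℝ (Fin d)),
        (∀ p ∈ Y, ∀ q ∈ Y, p ≠ q → 𝔪 ≤ dist p q) →
        ∀ (a b : EuclideanSpace ℝ (Fin d)) (η : ℝ), 0 < η →
          (∑' p : Y, ENNReal.ofReal
              (Real.exp (-η * (dist a (p : EuclideanSpace ℝ (Fin d)) +
                dist (p : EuclideanSpace ℝ (Fin d)) b)))) ≤
            ENNReal.ofReal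
              (C * (1 + η⁻¹ ^ d) * (1 + dist a b) ^ d * Real.exp (-η * dist a b)) := by
  classical
  set c₁ : ℝ := 2 / 𝔪 + 1 with hc₁def
  have hc₁ : 0 < c₁ := by positivity
  refine ⟨(d.factorial : ℝ) * (2 * c₁) ^ d, by positivity, ?_⟩
  intro Y hY a b η hη
  set x : ℝ := Real.exp (-η) with hxdef
  have hx0 : 0 ≤ x := (Real.exp_pos _).le
  set D : ℝ := dist a b with hDdef
  have hD : 0 ≤ D := dist_nonneg
  -- notation for the "excess" of a point
  set s : Y → ℝ := fun p => dist a (p : EuclideanSpace ℝ (Fin d)) +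
    dist (p : EuclideanSpace ℝ (Fin d)) b - D with hsdef
  have hs0 : ∀ p : Y, 0 ≤ s p := by
    intro p
    have := dist_triangle a (p : EuclideanSpace ℝ (Fin d)) b
    simp only [hsdef]
    linarith
  -- the double-sum majorant
  set F : ℕ → Y → ℝ≥0∞ := fun m p => if s p ≤ m + 1 then
    ENNReal.ofReal ((1 - x) * x ^ m) else 0 with hFdef
  have step1 : (∑' p : Y, ENNReal.ofReal
      (Real.exp (-η * (dist a (p : EuclideanSpace ℝ (Fin d)) +
        dist (p : EuclideanSpace ℝ (Fin d)) b)))) =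
      ENNReal.ofReal (Real.exp (-η * D)) * ∑' p : Y, ENNReal.ofReal (Real.exp (-η * s p)) := by
    rw [← ENNReal.tsum_mul_left]
    apply tsum_congr
    intro p
    rw [← ENNReal.ofReal_mul (Real.exp_pos _).le, ← Real.exp_add]
    congr 2
    simp only [hsdef]
    ring
  have step2 : (∑' p : Y, ENNReal.ofReal (Real.exp (-η * s p))) ≤
      ∑' m : ℕ, ∑' p : Y, F m p := by
    rw [← ENNReal.tsum_comm]
    exact ENNReal.tsum_le_tsum (fun p => ptwise hη (hs0 p))
  have step3 : ∀ m : ℕ, (∑' p : Y, F m p) ≤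
      ENNReal.ofReal ((1 - x) * x ^ m) * ENNReal.ofReal ((2 * (D + m + 1) / 𝔪 + 1) ^ d) := by
    intro m
    have hR : (0:ℝ) ≤ D + m + 1 := by positivity
    calc (∑' p : Y, F m p) ≤ ∑' p : Y, ENNReal.ofReal ((1 - x) * x ^ m) *
        (closedBall a (D + m + 1)).indicator (fun _ => (1 : ℝ≥0∞))
          (p : EuclideanSpace ℝ (Fin d)) := by
          apply ENNReal.tsum_le_tsum
          intro p
          simp only [hFdef]
          split_ifs with h
          · have hmem : (p : EuclideanSpace ℝ (Fin d)) ∈ closedBall a (D + m + 1) := by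
              rw [mem_closedBall, dist_comm]
              have h1 : dist a (p : EuclideanSpace ℝ (Fin d)) ≤
                  dist a (p : EuclideanSpace ℝ (Fin d)) +
                  dist (p : EuclideanSpace ℝ (Fin d)) b := by
                linarith [dist_nonneg (x := (p : EuclideanSpace ℝ (Fin d))) (y := b)]
              have h2 : dist a (p : EuclideanSpace ℝ (Fin d)) +
                  dist (p : EuclideanSpace ℝ (Fin d)) b ≤ D + m + 1 := by
                have := h
                simp only [hsdef] at this
                linarith
              linarith
            rw [Set.indicator_of_mem hmem, mul_one]
          · exact zero_le
      _ = ENNReal.ofReal ((1 - x) * x ^ m) *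
          ∑' p : Y, (closedBall a (D + m + 1)).indicator (fun _ => (1 : ℝ≥0∞))
            (p : EuclideanSpace ℝ (Fin d)) := ENNReal.tsum_mul_left
      _ ≤ _ := mul_le_mul_right (packB d hd h𝔪 Y hY a hR) _
  have hx1 : x < 1 := Real.exp_lt_one_iff.mpr (by linarith)
  have hbound : ∀ m : ℕ, ENNReal.ofReal ((1 - x) * x ^ m) *
      ENNReal.ofReal ((2 * (D + m + 1) / 𝔪 + 1) ^ d) ≤
      ENNReal.ofReal ((c₁ * (1 + D)) ^ d) *
        ENNReal.ofReal ((1 - x) * x ^ m * (1 + m) ^ d) := by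
    intro m
    have hm0 : (0:ℝ) ≤ (m:ℝ) := Nat.cast_nonneg m
    have hstep : (2 * (D + m + 1) / 𝔪 + 1) ^ d ≤ (c₁ * (1 + D)) ^ d * (1 + m) ^ d := by
      rw [← mul_pow]
      apply pow_le_pow_left₀ (by positivity)
      have hu : (0:ℝ) ≤ 2 / 𝔪 := by positivity
      have hdiv : 2 * (D + m + 1) / 𝔪 = 2 / 𝔪 * (D + m + 1) := by ring
      rw [hc₁def, hdiv]
      nlinarith [mul_nonneg (mul_nonneg hu hD) hm0, mul_nonneg hD hm0,
        mul_nonneg hu hD, mul_nonneg hu hm0]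
    calc ENNReal.ofReal ((1 - x) * x ^ m) * ENNReal.ofReal ((2 * (D + m + 1) / 𝔪 + 1) ^ d)
        ≤ ENNReal.ofReal ((1 - x) * x ^ m) *
          ENNReal.ofReal ((c₁ * (1 + D)) ^ d * (1 + m) ^ d) := by
          apply mul_le_mul_right
          apply ENNReal.ofReal_le_ofReal
          rw [← mul_pow] at hstep ⊢
          exact hstep
      _ = _ := by
          rw [← ENNReal.ofReal_mul (by nlinarith [pow_nonneg hx0 m]),
            ← ENNReal.ofReal_mul (by positivity)]
          congr 1
          ring
  calc (∑' p : Y, ENNReal.ofReal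
      (Real.exp (-η * (dist a (p : EuclideanSpace ℝ (Fin d)) +
        dist (p : EuclideanSpace ℝ (Fin d)) b))))
      = ENNReal.ofReal (Real.exp (-η * D)) *
        ∑' p : Y, ENNReal.ofReal (Real.exp (-η * s p)) := step1
    _ ≤ ENNReal.ofReal (Real.exp (-η * D)) * ∑' m : ℕ, ∑' p : Y, F m p :=
        mul_le_mul_right step2 _
    _ ≤ ENNReal.ofReal (Real.exp (-η * D)) * ∑' m : ℕ,
        (ENNReal.ofReal ((c₁ * (1 + D)) ^ d) *
          ENNReal.ofReal ((1 - x) * x ^ m * (1 + m) ^ d)) := by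
        apply mul_le_mul_right
        exact ENNReal.tsum_le_tsum (fun m => le_trans (step3 m) (hbound m))
    _ = ENNReal.ofReal (Real.exp (-η * D)) * (ENNReal.ofReal ((c₁ * (1 + D)) ^ d) *
        ∑' m : ℕ, ENNReal.ofReal ((1 - x) * x ^ m * (1 + m) ^ d)) := by
        rw [ENNReal.tsum_mul_left]
    _ ≤ ENNReal.ofReal (Real.exp (-η * D)) * (ENNReal.ofReal ((c₁ * (1 + D)) ^ d) *
        ENNReal.ofReal ((d.factorial : ℝ) * (1 + η⁻¹) ^ d)) := by
        apply mul_le_mul_right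
        exact mul_le_mul_right (seriesC d hη) _
    _ = ENNReal.ofReal (Real.exp (-η * D) * ((c₁ * (1 + D)) ^ d *
        ((d.factorial : ℝ) * (1 + η⁻¹) ^ d))) := by
        rw [← ENNReal.ofReal_mul (show (0:ℝ) ≤ (c₁ * (1 + D)) ^ d by positivity),
          ← ENNReal.ofReal_mul (Real.exp_pos _).le]
    _ ≤ ENNReal.ofReal ((d.factorial : ℝ) * (2 * c₁) ^ d * (1 + η⁻¹ ^ d) * (1 + D) ^ d *
        Real.exp (-η * D)) := by
        apply ENNReal.ofReal_le_ofReal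
        have hpow := one_add_pow_le d (t := η⁻¹) (by positivity)
        calc Real.exp (-η * D) * ((c₁ * (1 + D)) ^ d * ((d.factorial : ℝ) * (1 + η⁻¹) ^ d))
            = (Real.exp (-η * D) * (c₁ * (1 + D)) ^ d * (d.factorial : ℝ)) * (1 + η⁻¹) ^ d := by
              ring
          _ ≤ (Real.exp (-η * D) * (c₁ * (1 + D)) ^ d * (d.factorial : ℝ)) *
              (2 ^ d * (1 + η⁻¹ ^ d)) := by
              apply mul_le_mul_of_nonneg_left hpow (by positivity)
          _ = (d.factorial : ℝ) * (2 * c₁) ^ d * (1 + η⁻¹ ^ d) * (1 + D) ^ d *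
              Real.exp (-η * D) := by
              rw [mul_pow c₁ (1 + D), mul_pow 2 c₁]
              ring
end

section
/- Weyl-type stability of the spectrum under finite-rank plus small perturbations. Let 𝓗 be a complex Hilbert space and let S, K, P be bounded self-adjoint operators on 𝓗 with K of finite rank and ‖P‖ ≤ δ for some δ ≥ 0. Then for every η > 0 the set {λ ∈ σ(S + K + P) : dist(λ, σ(S)) ≥ δ + η} is finite. -/
open scoped InnerProductSpace ENNReal NNReal
open Filter

section Aux

variable {𝓗 : Type*} [NormedAddCommGroup 𝓗] [InnerProductSpace ℂ 𝓗] [CompleteSpace 𝓗]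

/-- Injectivity of `1 - f` for finite-rank `f` implies surjectivity (algebraic part). -/
lemma aux_surj_of_inj {E : Type*} [AddCommGroup E] [Module ℂ E]
    (f : E →ₗ[ℂ] E) (hf : FiniteDimensional ℂ (LinearMap.range f))
    (hinj : Function.Injective ((LinearMap.id : E →ₗ[ℂ] E) - f)) :
    Function.Surjective ((LinearMap.id : E →ₗ[ℂ] E) - f) := by
  set W := LinearMap.range f with hW
  have hmaps : ∀ x ∈ W, ((LinearMap.id : E →ₗ[ℂ] E) - f) x ∈ W := by
    intro x hx
    simp only [LinearMap.sub_apply, LinearMap.id_apply]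
    exact W.sub_mem hx (LinearMap.mem_range_self f x)
  set g : W →ₗ[ℂ] W := ((LinearMap.id : E →ₗ[ℂ] E) - f).restrict hmaps with hg
  have hginj : Function.Injective g := by
    intro a b hab
    have : ((LinearMap.id : E →ₗ[ℂ] E) - f) (a : E) = ((LinearMap.id : E →ₗ[ℂ] E) - f) (b : E) := by
      have := congrArg Subtype.val hab
      simpa [hg, LinearMap.restrict_apply] using this
    exact Subtype.ext (hinj this)
  have hgsurj : Function.Surjective g := (LinearMap.injective_iff_surjective).mp hginj
  intro y
  obtain ⟨w, hw⟩ := hgsurj ⟨f y, LinearMap.mem_range_self f y⟩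
  have hw' : (w : E) - f w = f y := by
    have := congrArg Subtype.val hw
    simpa [hg, LinearMap.restrict_apply] using this
  refine ⟨y + w, ?_⟩
  simp only [LinearMap.sub_apply, LinearMap.id_apply, map_add]
  rw [← hw']
  abel

/-- Fredholm alternative for finite-rank perturbations of the identity. -/
lemma aux_isUnit_one_sub (F : 𝓗 →L[ℂ] 𝓗)
    (hF : FiniteDimensional ℂ (LinearMap.range (F : 𝓗 →ₗ[ℂ] 𝓗)))
    (hinj : Function.Injective (1 - F : 𝓗 →L[ℂ] 𝓗)) :
    IsUnit (1 - F : 𝓗 →L[ℂ] 𝓗) := by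
  have hpt : ∀ x : 𝓗, ((LinearMap.id : 𝓗 →ₗ[ℂ] 𝓗) - (F : 𝓗 →ₗ[ℂ] 𝓗)) x
      = (1 - F : 𝓗 →L[ℂ] 𝓗) x := fun x => rfl
  have hinj' : Function.Injective ((LinearMap.id : 𝓗 →ₗ[ℂ] 𝓗) - (F : 𝓗 →ₗ[ℂ] 𝓗)) := by
    intro a b hab
    apply hinj
    rw [← hpt, ← hpt]
    exact hab
  have hsurj : Function.Surjective (1 - F : 𝓗 →L[ℂ] 𝓗) := by
    intro y
    obtain ⟨x, hx⟩ := aux_surj_of_inj _ hF hinj' y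
    exact ⟨x, by rw [← hpt]; exact hx⟩
  have hker : LinearMap.ker ((1 - F : 𝓗 →L[ℂ] 𝓗) : 𝓗 →ₗ[ℂ] 𝓗) = ⊥ := LinearMap.ker_eq_bot.mpr hinj
  have hrange : LinearMap.range ((1 - F : 𝓗 →L[ℂ] 𝓗) : 𝓗 →ₗ[ℂ] 𝓗) = ⊤ := LinearMap.range_eq_top.mpr hsurj
  refine ⟨(ContinuousLinearEquiv.ofBijective _ hker hrange).toUnit, ?_⟩
  ext x
  simp [ContinuousLinearEquiv.toUnit]

/-- Resolvent bound for self-adjoint operators at real points. -/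
lemma aux_resolvent_bound (A : 𝓗 →L[ℂ] 𝓗) (hA : IsSelfAdjoint A) (μ ε : ℝ) (hε : 0 < ε)
    (h : ∀ w ∈ spectrum ℂ A, ε ≤ ‖(μ : ℂ) - w‖) :
    ∃ u : (𝓗 →L[ℂ] 𝓗)ˣ, (u : 𝓗 →L[ℂ] 𝓗) = algebraMap ℂ (𝓗 →L[ℂ] 𝓗) (μ : ℂ) - A ∧
      ‖((↑u⁻¹ : 𝓗 →L[ℂ] 𝓗))‖ ≤ 1 / ε := by
  have hμ : (μ : ℂ) ∉ spectrum ℂ A := by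
    intro hmem
    have := h _ hmem
    simp at this
    linarith
  have hunit : IsUnit (algebraMap ℂ (𝓗 →L[ℂ] 𝓗) (μ : ℂ) - A) := spectrum.notMem_iff.mp hμ
  set u := hunit.unit with hudef
  refine ⟨u, hunit.unit_spec, ?_⟩
  set B := (↑u⁻¹ : 𝓗 →L[ℂ] 𝓗) with hB
  have hxs : IsSelfAdjoint (u : 𝓗 →L[ℂ] 𝓗) := by
    rw [hunit.unit_spec]
    have h1 : IsSelfAdjoint (algebraMap ℂ (𝓗 →L[ℂ] 𝓗) (μ : ℂ)) :=
      IsSelfAdjoint.algebraMap _ (Complex.conj_ofReal μ)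
    exact h1.sub hA
  have hBs : IsSelfAdjoint B := by
    have key : star B * (u : 𝓗 →L[ℂ] 𝓗) = 1 := by
      conv_lhs => rw [← hxs.star_eq]
      rw [← star_mul, u.mul_inv, star_one]
    have : star B = star B * ((u : 𝓗 →L[ℂ] 𝓗) * B) := by rw [u.mul_inv, mul_one]
    rw [IsSelfAdjoint, this, ← mul_assoc, key, one_mul]
  have hbd : ∀ k ∈ spectrum ℂ B, ‖k‖ ≤ 1 / ε := by
    intro k hk
    have hk0 : k ≠ 0 := by
      intro h0
      rw [h0] at hk
      exact spectrum.zero_notMem ℂ u⁻¹.isUnit hk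
    have hkinv : (k⁻¹ : ℂ) ∈ spectrum ℂ ((u : 𝓗 →L[ℂ] 𝓗)) := by
      have := (spectrum.inv_mem_iff (r := Units.mk0 k hk0) (a := u⁻¹)).mp hk
      simpa using this
    rw [hunit.unit_spec, ← spectrum.singleton_sub_eq] at hkinv
    obtain ⟨x, hx, y, hy, hxy⟩ := hkinv
    rw [Set.mem_singleton_iff] at hx
    subst hx
    have h1 : ε ≤ ‖k⁻¹‖ := hxy ▸ h y hy
    rw [norm_inv] at h1
    have hknorm : 0 < ‖k‖ := norm_pos_iff.mpr hk0
    rw [le_div_iff₀ hε]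
    calc ‖k‖ * ε ≤ ‖k‖ * ‖k‖⁻¹ := by
          exact mul_le_mul_of_nonneg_left h1 (norm_nonneg _)
    _ = 1 := mul_inv_cancel₀ (ne_of_gt hknorm)
  have hεinv : (0:ℝ) ≤ 1 / ε := by positivity
  have hrad : ‖B‖₊ ≤ Real.toNNReal (1 / ε) := by
    rw [← ENNReal.coe_le_coe, ← hBs.spectralRadius_eq_nnnorm]
    refine iSup₂_le fun k hk => ?_
    refine ENNReal.coe_le_coe.mpr ?_
    rw [← NNReal.coe_le_coe, Real.coe_toNNReal _ hεinv]
    simpa using hbd k hk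
  have := NNReal.coe_le_coe.mpr hrad
  rw [Real.coe_toNNReal _ hεinv] at this
  simpa using this

/-- Weyl step: the spectrum of `S + P` is within `δ + η` of points far from `σ S`. -/
lemma aux_weyl_step (S P : 𝓗 →L[ℂ] 𝓗) (hS : IsSelfAdjoint S) (hSP : IsSelfAdjoint (S + P))
    (δ : ℝ) (hδ : 0 ≤ δ) (hPnorm : ‖P‖ ≤ δ) (η : ℝ) (hη : 0 < η) (lam : ℂ)
    (hlam : ∀ w ∈ spectrum ℂ S, δ + η ≤ ‖lam - w‖) :
    ∀ ν ∈ spectrum ℂ (S + P), η ≤ ‖lam - ν‖ := by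
  intro ν hν
  by_contra hlt
  push_neg at hlt
  have hνre : ν = (ν.re : ℂ) := hSP.mem_spectrum_eq_re hν
  set ε : ℝ := δ + η - ‖lam - ν‖ with hεdef
  have hεδ : δ < ε := by linarith
  have hε : 0 < ε := lt_of_le_of_lt hδ hεδ
  have hb : ∀ w ∈ spectrum ℂ S, ε ≤ ‖((ν.re : ℝ) : ℂ) - w‖ := by
    intro w hw
    rw [← hνre]
    have h1 := hlam w hw
    have h2 : ‖lam - w‖ ≤ ‖lam - ν‖ + ‖ν - w‖ := by
      have : lam - w = (lam - ν) + (ν - w) := by ring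
      rw [this]
      exact norm_add_le _ _
    linarith
  obtain ⟨u', hu', hnorm'⟩ := aux_resolvent_bound S hS ν.re ε hε hb
  have hsmall : ‖(↑u'⁻¹ : 𝓗 →L[ℂ] 𝓗) * P‖ < 1 := by
    calc ‖(↑u'⁻¹ : 𝓗 →L[ℂ] 𝓗) * P‖ ≤ ‖(↑u'⁻¹ : 𝓗 →L[ℂ] 𝓗)‖ * ‖P‖ := norm_mul_le _ _
    _ ≤ (1 / ε) * δ := by
        exact mul_le_mul hnorm' hPnorm (norm_nonneg _) (by positivity)
    _ < 1 := by
        rw [div_mul_eq_mul_div, one_mul, div_lt_one hε]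
        exact hεδ
  have hfac : algebraMap ℂ (𝓗 →L[ℂ] 𝓗) ν - (S + P)
      = (↑u' : 𝓗 →L[ℂ] 𝓗) * (1 - (↑u'⁻¹ : 𝓗 →L[ℂ] 𝓗) * P) := by
    rw [mul_sub, mul_one, ← mul_assoc, u'.mul_inv, one_mul, hu']
    conv_lhs => rw [hνre]
    abel
  have hisunit : IsUnit (algebraMap ℂ (𝓗 →L[ℂ] 𝓗) ν - (S + P)) := by
    rw [hfac]
    refine u'.isUnit.mul ?_
    have := (Units.oneSub _ hsmall).isUnit
    simpa using this
  exact spectrum.notMem_iff.mpr hisunit hν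

end Aux

/-- **Weyl-type stability of the spectrum.** Let `S, K, P` be bounded
self-adjoint operators on a complex Hilbert space with `K` of finite rank and `‖P‖ ≤ δ`.
Then for every `η > 0`, the set of spectral points of `S + K + P` at distance at least
`δ + η` from `σ(S)` is finite. -/
theorem stmt16 (𝓗 : Type*) [NormedAddCommGroup 𝓗] [InnerProductSpace ℂ 𝓗] [CompleteSpace 𝓗]
    (S K P : 𝓗 →L[ℂ] 𝓗) (hS : IsSelfAdjoint S) (hK : IsSelfAdjoint K) (hP : IsSelfAdjoint P)
    (hKrank : FiniteDimensional ℂ (LinearMap.range (K : 𝓗 →ₗ[ℂ] 𝓗)))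
    (δ : ℝ) (hδ : 0 ≤ δ) (hPnorm : ‖P‖ ≤ δ) :
    ∀ η : ℝ, 0 < η →
      {z : ℂ | z ∈ spectrum ℂ (S + K + P) ∧
        ∀ w ∈ spectrum ℂ S, δ + η ≤ ‖z - w‖}.Finite := by
  intro η hη
  by_contra hfin
  have hinf : {z : ℂ | z ∈ spectrum ℂ (S + K + P) ∧
      ∀ w ∈ spectrum ℂ S, δ + η ≤ ‖z - w‖}.Infinite := hfin
  set T := S + K + P with hT_def
  have hSP : IsSelfAdjoint (S + P) := hS.add hP
  have hT : IsSelfAdjoint T := (hS.add hK).add hP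
  let f := hinf.natEmbedding
  set lam : ℕ → ℂ := fun n => ((f n : ℂ)) with hlamdef
  have hlaminj : Function.Injective lam := by
    intro a b h
    exact f.injective (Subtype.ext h)
  have hmemT : ∀ n, lam n ∈ spectrum ℂ T := fun n => (f n).2.1
  have hlam : ∀ n, ∀ w ∈ spectrum ℂ S, δ + η ≤ ‖lam n - w‖ := fun n => (f n).2.2
  have hreal : ∀ n, lam n = (((lam n).re : ℝ) : ℂ) := fun n => hT.mem_spectrum_eq_re (hmemT n)
  have hconj : ∀ n, (starRingEnd ℂ) (lam n) = lam n := by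
    intro n
    rw [hreal n, Complex.conj_ofReal]
  -- resolvents of S + P at lam n
  have hres : ∀ n, ∃ u : (𝓗 →L[ℂ] 𝓗)ˣ,
      (↑u : 𝓗 →L[ℂ] 𝓗) = algebraMap ℂ (𝓗 →L[ℂ] 𝓗) (lam n) - (S + P) ∧
      ‖(↑u⁻¹ : 𝓗 →L[ℂ] 𝓗)‖ ≤ 1 / η := by
    intro n
    have hw := aux_weyl_step S P hS hSP δ hδ hPnorm η hη (lam n) (hlam n)
    have hb : ∀ w ∈ spectrum ℂ (S + P), η ≤ ‖(((lam n).re : ℝ) : ℂ) - w‖ := by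
      intro w hw'
      rw [← hreal n]
      exact hw w hw'
    obtain ⟨u, hu1, hu2⟩ := aux_resolvent_bound (S + P) hSP (lam n).re η hη hb
    exact ⟨u, by rw [hu1, ← hreal n], hu2⟩
  choose u hu hunorm using hres
  -- eigenvectors
  have hexv : ∀ n, ∃ v : 𝓗, ‖v‖ = 1 ∧ T v = lam n • v ∧
      v = (↑(u n)⁻¹ : 𝓗 →L[ℂ] 𝓗) (K v) := by
    intro n
    have hnotunit : ¬ IsUnit (algebraMap ℂ (𝓗 →L[ℂ] 𝓗) (lam n) - T) := by
      have := hmemT n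
      rw [spectrum.mem_iff] at this
      exact this
    set Rn := (↑(u n)⁻¹ : 𝓗 →L[ℂ] 𝓗) with hRn
    have hfact : algebraMap ℂ (𝓗 →L[ℂ] 𝓗) (lam n) - T = (↑(u n) : 𝓗 →L[ℂ] 𝓗) * (1 - Rn * K) := by
      rw [mul_sub, mul_one, ← mul_assoc, (u n).mul_inv, one_mul, hu n, hT_def]
      abel
    have h1 : ¬ IsUnit (1 - Rn * K : 𝓗 →L[ℂ] 𝓗) := by
      intro hu1
      exact hnotunit (by rw [hfact]; exact (u n).isUnit.mul hu1)
    have hFfd : FiniteDimensional ℂ (LinearMap.range ((Rn * K : 𝓗 →L[ℂ] 𝓗) : 𝓗 →ₗ[ℂ] 𝓗)) := by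
      have heq : ((Rn * K : 𝓗 →L[ℂ] 𝓗) : 𝓗 →ₗ[ℂ] 𝓗)
          = (Rn : 𝓗 →ₗ[ℂ] 𝓗) ∘ₗ (K : 𝓗 →ₗ[ℂ] 𝓗) := rfl
      rw [heq, LinearMap.range_comp]
      exact Module.Finite.map _ _
    have hninj : ¬ Function.Injective (1 - Rn * K : 𝓗 →L[ℂ] 𝓗) := by
      intro hinj
      exact h1 (aux_isUnit_one_sub _ hFfd hinj)
    rw [Function.not_injective_iff] at hninj
    obtain ⟨a, b, hab, hne⟩ := hninj
    set v0 := a - b with hv0def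
    have hv0 : v0 ≠ 0 := sub_ne_zero.mpr hne
    have happ : (1 - Rn * K : 𝓗 →L[ℂ] 𝓗) v0 = 0 := by
      rw [hv0def, map_sub, hab, sub_self]
    have hv0eq : v0 = Rn (K v0) := by
      have := happ
      simp only [ContinuousLinearMap.sub_apply, ContinuousLinearMap.one_apply,
        ContinuousLinearMap.mul_apply, sub_eq_zero] at this
      exact this
    have hTv0 : T v0 = lam n • v0 := by
      have h2 : (algebraMap ℂ (𝓗 →L[ℂ] 𝓗) (lam n) - T) v0 = 0 := by
        rw [hfact]
        rw [ContinuousLinearMap.mul_apply, happ, map_zero]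
      simp only [ContinuousLinearMap.sub_apply, Algebra.algebraMap_eq_smul_one,
        ContinuousLinearMap.smul_apply, ContinuousLinearMap.one_apply, sub_eq_zero] at h2
      exact h2.symm
    set c : ℂ := ((‖v0‖ : ℝ) : ℂ)⁻¹ with hc
    have hv0n : (0:ℝ) < ‖v0‖ := norm_pos_iff.mpr hv0
    refine ⟨c • v0, ?_, ?_, ?_⟩
    · rw [norm_smul, hc, norm_inv]
      simp only [Complex.norm_real, Real.norm_eq_abs, abs_of_pos hv0n]
      field_simp
    · rw [map_smul, hTv0, smul_comm]
    · rw [map_smul, map_smul, ← hv0eq]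
  choose v hv1 hv2 hv3 using hexv
  -- orthonormality
  have hvON : Orthonormal ℂ v := by
    constructor
    · exact hv1
    · intro i j hij
      have hsym := hT.isSymmetric
      have h1 : ⟪T (v i), v j⟫_ℂ = ⟪v i, T (v j)⟫_ℂ := hsym (v i) (v j)
      rw [hv2 i, hv2 j, inner_smul_left, inner_smul_right, hconj i] at h1
      have hne : lam i ≠ lam j := fun h => hij (hlaminj h)
      by_contra hp
      exact hne (mul_right_cancel₀ hp h1)
  -- Bessel argument
  haveI : FiniteDimensional ℂ (LinearMap.range (K : 𝓗 →ₗ[ℂ] 𝓗)) := hKrank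
  set W := LinearMap.range (K : 𝓗 →ₗ[ℂ] 𝓗) with hWdef
  set b := stdOrthonormalBasis ℂ W with hb
  have hKbound : ∀ n, ‖K (v n)‖ ≤ ∑ j, ‖⟪K ((b j : W) : 𝓗), v n⟫_ℂ‖ := by
    intro n
    set w : W := ⟨K (v n), LinearMap.mem_range_self _ (v n)⟩ with hwdef
    have hexp : K (v n) = ∑ j, ⟪K ((b j : W) : 𝓗), v n⟫_ℂ • ((b j : W) : 𝓗) := by
      have h0 := b.sum_repr w
      have h1 := congrArg (Subtype.val : W → 𝓗) h0
      rw [show ((w : 𝓗)) = K (v n) from rfl] at h1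
      rw [← h1]
      rw [AddSubmonoidClass.coe_finset_sum]
      refine Finset.sum_congr rfl fun j _ => ?_
      rw [SetLike.val_smul]
      congr 1
      rw [b.repr_apply_apply]
      have hinnW : ⟪b j, w⟫_ℂ = ⟪((b j : W) : 𝓗), K (v n)⟫_ℂ := rfl
      rw [hinnW]
      exact (hK.isSymmetric ((b j : W) : 𝓗) (v n)).symm
    calc ‖K (v n)‖ = ‖∑ j, ⟪K ((b j : W) : 𝓗), v n⟫_ℂ • ((b j : W) : 𝓗)‖ := by rw [← hexp]
    _ ≤ ∑ j, ‖⟪K ((b j : W) : 𝓗), v n⟫_ℂ • ((b j : W) : 𝓗)‖ := norm_sum_le _ _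
    _ = ∑ j, ‖⟪K ((b j : W) : 𝓗), v n⟫_ℂ‖ := by
        refine Finset.sum_congr rfl fun j _ => ?_
        rw [norm_smul]
        have : ‖((b j : W) : 𝓗)‖ = 1 := by
          rw [show ‖((b j : W) : 𝓗)‖ = ‖b j‖ from rfl]
          exact b.orthonormal.1 j
        rw [this, mul_one]
    _ = ∑ j, ‖⟪K ((b j : W) : 𝓗), v n⟫_ℂ‖ := rfl
  have htend : Tendsto (fun n => ∑ j, ‖⟪K ((b j : W) : 𝓗), v n⟫_ℂ‖) atTop (nhds 0) := by
    have hj : ∀ j, Tendsto (fun n => ‖⟪K ((b j : W) : 𝓗), v n⟫_ℂ‖) atTop (nhds 0) := by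
      intro j
      have hsum : Summable (fun n => ‖⟪v n, K ((b j : W) : 𝓗)⟫_ℂ‖ ^ 2) :=
        Orthonormal.inner_products_summable _ hvON
      have h0 := hsum.tendsto_atTop_zero
      have h1 : Tendsto (fun n => Real.sqrt (‖⟪v n, K ((b j : W) : 𝓗)⟫_ℂ‖ ^ 2)) atTop
          (nhds (Real.sqrt 0)) := (Real.continuous_sqrt.tendsto 0).comp h0
      rw [Real.sqrt_zero] at h1
      have h2 : (fun n => Real.sqrt (‖⟪v n, K ((b j : W) : 𝓗)⟫_ℂ‖ ^ 2))
          = fun n => ‖⟪K ((b j : W) : 𝓗), v n⟫_ℂ‖ := by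
        funext n
        rw [Real.sqrt_sq (norm_nonneg _)]
        exact norm_inner_symm _ _
      rwa [h2] at h1
    have := tendsto_finset_sum (Finset.univ : Finset (Fin (Module.finrank ℂ W)))
      (fun j _ => hj j)
    simpa using this
  have hlow : ∀ n, η ≤ ∑ j, ‖⟪K ((b j : W) : 𝓗), v n⟫_ℂ‖ := by
    intro n
    have h1 : (1:ℝ) = ‖v n‖ := (hv1 n).symm
    have h2 : ‖v n‖ ≤ (1 / η) * ‖K (v n)‖ := by
      conv_lhs => rw [hv3 n]
      calc ‖(↑(u n)⁻¹ : 𝓗 →L[ℂ] 𝓗) (K (v n))‖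
          ≤ ‖(↑(u n)⁻¹ : 𝓗 →L[ℂ] 𝓗)‖ * ‖K (v n)‖ := ContinuousLinearMap.le_opNorm _ _
      _ ≤ (1 / η) * ‖K (v n)‖ := by
          exact mul_le_mul_of_nonneg_right (hunorm n) (norm_nonneg _)
    have h3 := hKbound n
    have h4 : (1:ℝ) ≤ (1 / η) * (∑ j, ‖⟪K ((b j : W) : 𝓗), v n⟫_ℂ‖) := by
      calc (1:ℝ) = ‖v n‖ := h1
      _ ≤ (1 / η) * ‖K (v n)‖ := h2
      _ ≤ (1 / η) * (∑ j, ‖⟪K ((b j : W) : 𝓗), v n⟫_ℂ‖) := by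
          exact mul_le_mul_of_nonneg_left h3 (by positivity)
    have h5 : η * 1 ≤ η * ((1 / η) * (∑ j, ‖⟪K ((b j : W) : 𝓗), v n⟫_ℂ‖)) :=
      mul_le_mul_of_nonneg_left h4 hη.le
    rw [mul_one, ← mul_assoc, mul_one_div, div_self hη.ne', one_mul] at h5
    exact h5
  obtain ⟨n, hn⟩ := (htend.eventually_lt_const hη).exists
  exact absurd (hlow n) (not_le.mpr hn)
end
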